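/- Let X be any random vector in ℝ^p and let k-max~(X) = X_{ι*} be the randomized k-max (ι* chosen uniformly from a random size-k argmax-average set A*, with external randomization independent of X). Then for every Borel set B ⊆ ℝ, P(k-max(X) ∈ B) ≤ k · P(k-max~(X) ∈ B). -/

import Mathlib

open MeasureTheory ProbabilityTheory

/-- The `k`-th largest coordinate of `x ∈ ℝ^p`. -/
noncomputable def kmax {p : ℕ} (k : ℕ) (x : Fin p → ℝ) : ℝ :=
  ((List.ofFn x).insertionSort (· ≥ ·)).getD (k - 1) 0

instance {α : Type*} : MeasurableSpace (Finset α) := ⊤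

theorem countP_ofFn (p : ℕ) (x : Fin p → ℝ) (q : ℝ → Prop) [DecidablePred q] :
    (List.ofFn x).countP (fun a => decide (q a)) = (Finset.univ.filter (fun j => q (x j))).card := by
  rw [List.ofFn_eq_map, List.countP_map, Fin.univ_def]
  simp only [Finset.filter, Finset.card, Multiset.countP_eq_card_filter,
    List.countP_eq_length_filter, Function.comp]
  rfl

theorem exists_eq_kmax {p k : ℕ} (hk : 1 ≤ k) (hkp : k ≤ p) (x : Fin p → ℝ)
    (A : Finset (Fin p)) (hA : A.card = k)
    (hmax : ∀ B : Finset (Fin p), B.card = k → ∑ j ∈ B, x j ≤ ∑ j ∈ A, x j) :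
    ∃ j ∈ A, x j = kmax k x := by
  set l := (List.ofFn x).insertionSort (· ≥ ·) with hl
  have hlen : l.length = p := by simp [hl]
  have hsort : l.Pairwise (· ≥ ·) := List.pairwise_insertionSort _ _
  have hperm : l.Perm (List.ofFn x) := List.perm_insertionSort _ _
  have hkl : k - 1 < l.length := by omega
  have hvget : kmax k x = l.get ⟨k-1, hkl⟩ := by
    rw [kmax, ← hl, List.getD_eq_getElem (hn := hkl)]; rfl
  set v := kmax k x with hv
  -- every element of take k l is ≥ v
  have htake : ∀ a ∈ l.take k, v ≤ a := by
    intro a ha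
    rw [List.mem_take_iff_getElem] at ha
    obtain ⟨i, hi, rfl⟩ := ha
    have hik : i < k := lt_of_lt_of_le hi (min_le_left _ _)
    rw [hvget]
    exact hsort.rel_get_of_le (a := ⟨i, by omega⟩) (b := ⟨k-1, hkl⟩) (by simp [Fin.le_def]; omega)
  have hdrop : ∀ a ∈ l.drop (k-1), a ≤ v := by
    intro a ha
    rw [List.mem_drop_iff_getElem] at ha
    obtain ⟨i, hi, rfl⟩ := ha
    rw [hvget]
    exact hsort.rel_get_of_le (a := ⟨k-1, hkl⟩) (b := ⟨k-1+i, by omega⟩) (by simp [Fin.le_def])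
  -- counts
  have hcount_ge : k ≤ l.countP (fun a => decide (v ≤ a)) := by
    have h1 : l.countP (fun a => decide (v ≤ a)) =
        (l.take k).countP (fun a => decide (v ≤ a)) +
        (l.drop k).countP (fun a => decide (v ≤ a)) := by
      rw [← List.countP_append, List.take_append_drop]
    have h2 : (l.take k).countP (fun a => decide (v ≤ a)) = (l.take k).length := by
      rw [List.countP_eq_length]
      intro a ha; simpa using htake a ha
    have h3 : (l.take k).length = k := by simp [hlen]; omega
    omega
  have hcount_gt : l.countP (fun a => decide (v < a)) ≤ k - 1 := by
    have h1 : l.countP (fun a => decide (v < a)) =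
        (l.take (k-1)).countP (fun a => decide (v < a)) +
        (l.drop (k-1)).countP (fun a => decide (v < a)) := by
      rw [← List.countP_append, List.take_append_drop]
    have h2 : (l.drop (k-1)).countP (fun a => decide (v < a)) = 0 := by
      rw [List.countP_eq_zero]
      intro a ha
      simpa using hdrop a ha
    have h3 := List.countP_le_length (l := l.take (k-1)) (p := fun a => decide (v < a))
    have h4 : (l.take (k-1)).length ≤ k - 1 := by simp
    omega
  -- transport to finsets
  have hfin_ge : k ≤ (Finset.univ.filter (fun j => v ≤ x j)).card := by
    rw [← countP_ofFn, ← hperm.countP_eq]; exact hcount_ge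
  have hfin_gt : (Finset.univ.filter (fun j => v < x j)).card ≤ k - 1 := by
    rw [← countP_ofFn, ← hperm.countP_eq]; exact hcount_gt
  by_contra hcon
  push_neg at hcon
  -- A ∩ GE ⊆ GT
  have hsub : A ∩ (Finset.univ.filter (fun j => v ≤ x j)) ⊆
      Finset.univ.filter (fun j => v < x j) := by
    intro j hj
    simp only [Finset.mem_inter, Finset.mem_filter, Finset.mem_univ, true_and] at hj ⊢
    exact lt_of_le_of_ne hj.2 (fun h => hcon j hj.1 h.symm)
  have hcard_int : (A ∩ (Finset.univ.filter (fun j => v ≤ x j))).card ≤ k - 1 :=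
    le_trans (Finset.card_le_card hsub) hfin_gt
  -- j0 ∈ A with x j0 < v
  obtain ⟨j0, hj0A, hj0⟩ : ∃ j0 ∈ A, ¬ (v ≤ x j0) := by
    by_contra h
    push_neg at h
    have : A ∩ (Finset.univ.filter (fun j => v ≤ x j)) = A := by
      apply Finset.inter_eq_left.mpr
      intro j hj
      simp only [Finset.mem_filter, Finset.mem_univ, true_and]
      exact h j hj
    rw [this] at hcard_int
    omega
  -- i0 ∈ GE \ A
  obtain ⟨i0, hi0ge, hi0A⟩ : ∃ i0, v ≤ x i0 ∧ i0 ∉ A := by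
    by_contra h
    push_neg at h
    have : (Finset.univ.filter (fun j => v ≤ x j)) ⊆
        A ∩ (Finset.univ.filter (fun j => v ≤ x j)) := by
      intro j hj
      simp only [Finset.mem_filter, Finset.mem_univ, true_and] at hj
      exact Finset.mem_inter.mpr ⟨h j hj, by simpa using hj⟩
    have := Finset.card_le_card this
    omega
  -- swap
  have hi0e : i0 ∉ A.erase j0 := fun h => hi0A (Finset.mem_of_mem_erase h)
  have hBcard : (insert i0 (A.erase j0)).card = k := by
    rw [Finset.card_insert_of_notMem hi0e, Finset.card_erase_of_mem hj0A]
    omega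
  have := hmax _ hBcard
  rw [Finset.sum_insert hi0e, ← Finset.add_sum_erase A x hj0A] at this
  have : x i0 ≤ x j0 := by linarith
  push_neg at hj0
  linarith

/-- For the randomized k-max `k-max~(X) = X (istar ·)` (with `istar` uniform on the
randomized size-`k` argmax-average set `Astar`, externally randomized independently
of `X`), one has `P(k-max(X) ∈ B) ≤ k · P(k-max~(X) ∈ B)` for every Borel `B ⊆ ℝ`. -/
theorem kmax_le_mul_randomized_kmax
    {Ω : Type*} [MeasurableSpace Ω] (P : Measure Ω) [IsProbabilityMeasure P]
    {p k : ℕ} (hk : 1 ≤ k) (hkp : k ≤ p)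
    (X : Ω → Fin p → ℝ) (hX : Measurable X)
    (Astar : Ω → Finset (Fin p)) (hAstar : Measurable Astar)
    (istar : Ω → Fin p) (histar : Measurable istar)
    (hAcard : ∀ ω, (Astar ω).card = k)
    (hAmax : ∀ ω (B : Finset (Fin p)), B.card = k →
      (∑ j ∈ B, X ω j) / k ≤ (∑ j ∈ Astar ω, X ω j) / k)
    (hmem : ∀ ω, istar ω ∈ Astar ω)
    -- conditionally on `(X, Astar)`, `istar` is uniform on `Astar`:
    (hunif : ∀ (j : Fin p) (S : Set ((Fin p → ℝ) × Finset (Fin p))), MeasurableSet S →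
      P {ω | (X ω, Astar ω) ∈ S ∧ istar ω = j} =
        P {ω | (X ω, Astar ω) ∈ S ∧ j ∈ Astar ω} / k)
    (B : Set ℝ) (hB : MeasurableSet B) :
    P {ω | kmax k (X ω) ∈ B} ≤ k * P {ω | X ω (istar ω) ∈ B} := by
  classical
  set E : Fin p → Set Ω := fun j => {ω | (X ω j ∈ B ∧ j ∈ Astar ω) ∧ istar ω = j} with hE
  set F : Fin p → Set Ω := fun j => {ω | (X ω j ∈ B ∧ j ∈ Astar ω) ∧ j ∈ Astar ω} with hF
  have hkpos : (0:ℝ) < k := by exact_mod_cast hk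
  have hmeasE : ∀ j, MeasurableSet (E j) := by
    intro j
    apply MeasurableSet.inter
    · apply MeasurableSet.inter
      · exact (hX.eval (a := j)) hB
      · show MeasurableSet (Astar ⁻¹' {A | j ∈ A})
        exact hAstar MeasurableSpace.measurableSet_top
    · exact histar (measurableSet_singleton j)
  -- relation from hunif
  have hPF : ∀ j, P (F j) = k * P (E j) := by
    intro j
    have hS : MeasurableSet {q : (Fin p → ℝ) × Finset (Fin p) | q.1 j ∈ B ∧ j ∈ q.2} := by
      apply MeasurableSet.inter
      · exact measurable_fst.eval (a := j) hB
      · show MeasurableSet ((Prod.snd : (Fin p → ℝ) × Finset (Fin p) → Finset (Fin p)) ⁻¹' {A | j ∈ A})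
        exact measurable_snd MeasurableSpace.measurableSet_top
    have h := hunif j _ hS
    have hk0 : (k : ENNReal) ≠ 0 := Nat.cast_ne_zero.mpr (by omega)
    have hkt : (k : ENNReal) ≠ ⊤ := ENNReal.natCast_ne_top k
    exact ((ENNReal.eq_div_iff hk0 hkt).mp h).symm
  -- inclusion
  have hsub : {ω | kmax k (X ω) ∈ B} ⊆ ⋃ j, F j := by
    intro ω hω
    obtain ⟨j, hjA, hj⟩ := exists_eq_kmax hk hkp (X ω) (Astar ω) (hAcard ω)
      (fun B' hB' => by
        have := hAmax ω B' hB'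
        rwa [div_le_div_iff_of_pos_right hkpos] at this)
    exact Set.mem_iUnion.mpr ⟨j, ⟨⟨hj ▸ hω, hjA⟩, hjA⟩⟩
  have hdisj : Pairwise (Function.onFun Disjoint E) := by
    intro i j hij
    simp only [Function.onFun, Set.disjoint_left]
    intro ω hi hj
    exact hij (hi.2.symm.trans hj.2)
  have hEsub : (⋃ j, E j) ⊆ {ω | X ω (istar ω) ∈ B} := by
    intro ω hω
    obtain ⟨j, hj⟩ := Set.mem_iUnion.mp hω
    have := hj.2
    simp only [Set.mem_setOf_eq]
    rw [this]
    exact hj.1.1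
  calc P {ω | kmax k (X ω) ∈ B} ≤ P (⋃ j, F j) := measure_mono hsub
    _ ≤ ∑ j, P (F j) := by
        refine le_trans (measure_iUnion_le _) ?_
        rw [tsum_fintype]
    _ = ∑ j, (k : ENNReal) * P (E j) := by simp_rw [hPF]
    _ = k * ∑ j, P (E j) := by rw [Finset.mul_sum]
    _ = k * P (⋃ j, E j) := by
        rw [measure_iUnion hdisj hmeasE, tsum_fintype]
    _ ≤ k * P {ω | X ω (istar ω) ∈ B} := by
        gcongr
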